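/- Let Σ = {a, b, a', b'} be a four-letter alphabet with involution given by overline(a) = a', overline(a') = a, overline(b) = b', overline(b') = b, and let κ = 1. Let L₁ = { aⁿ·b·a' : n ≥ 0 } ∪ { aⁿ·b'·a' : n ≥ 0 } and L₂ = { a·b·a'ⁿ : n ≥ 0 } (both regular languages). Then H₁(L₁,L₂) = { aⁱ·b·a'ʲ : i ≥ 1, j ≥ 1 } ∪ { aⁱ·b'·a'ʲ : i ≥ j ≥ 1 }, and this language is not regular. In particular, the hairpin completion of regular languages is not necessarily regular. -/

import Mathlib

/-- A four-letter alphabet `{a, b, a', b'}`. -/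
inductive Letter : Type
  | a : Letter
  | b : Letter
  | a' : Letter
  | b' : Letter
deriving DecidableEq

instance : Fintype Letter :=
  ⟨{.a, .b, .a', .b'}, fun x => by cases x <;> simp⟩

/-- The involution on `Letter`: `a ↔ a'` and `b ↔ b'`. -/
def Letter.bar : Letter → Letter
  | .a => .a'
  | .a' => .a
  | .b => .b'
  | .b' => .b

/-- The antimorphic extension of an involution on letters to words. -/
def ovr {σ : Type} (bar : σ → σ) (w : List σ) : List σ := (w.map bar).reverse

/-- The hairpin completion `H_κ(L₁, L₂)`. -/
def hairpinCompletion {σ : Type} (bar : σ → σ) (κ : ℕ) (L1 L2 : Language σ) :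
    Language σ :=
  { π | ∃ γ α β : List σ,
      π = γ ++ α ++ β ++ ovr bar α ++ ovr bar γ ∧
      κ ≤ α.length ∧
      (γ ++ α ++ β ++ ovr bar α ∈ L1 ∨ α ++ β ++ ovr bar α ++ ovr bar γ ∈ L2) }

/-- `L₁ = a^*·(b|b')·a'`. -/
def exL1 : Language Letter :=
  { w | (∃ n : ℕ, w = List.replicate n .a ++ [.b, .a']) ∨
        (∃ n : ℕ, w = List.replicate n .a ++ [.b', .a']) }

/-- `L₂ = a·b·a'^*`. -/
def exL2 : Language Letter :=
  { w | ∃ n : ℕ, w = [.a, .b] ++ List.replicate n .a' }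

-- basic ovr lemmas
lemma ovr_cons {σ : Type} (bar : σ → σ) (x : σ) (w : List σ) :
    ovr bar (x :: w) = ovr bar w ++ [bar x] := by simp [ovr]

lemma ovr_nil {σ : Type} (bar : σ → σ) : ovr bar ([] : List σ) = [] := rfl

lemma ovr_replicate_a' (g : ℕ) :
    ovr Letter.bar (List.replicate g Letter.a') = List.replicate g Letter.a := by
  simp [ovr, Letter.bar]

lemma ovr_replicate_a (g : ℕ) :
    ovr Letter.bar (List.replicate g Letter.a) = List.replicate g Letter.a' := by
  simp [ovr, Letter.bar]

lemma ovr_ovr (w : List Letter) : ovr Letter.bar (ovr Letter.bar w) = w := by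
  have h : ∀ x : Letter, x.bar.bar = x := by decide
  simp only [ovr, List.map_reverse, List.reverse_reverse, List.map_map]
  have : Letter.bar ∘ Letter.bar = id := funext h
  simp [this]

open Letter in
lemma decompL1 {γ α β : List Letter} {n : ℕ} {c : Letter}
    (hc : c = Letter.b ∨ c = Letter.b')
    (hα : 1 ≤ α.length)
    (E : γ ++ α ++ β ++ ovr Letter.bar α = List.replicate n Letter.a ++ [c, Letter.a']) :
    ∃ g, g + 1 ≤ n ∧ γ = List.replicate g Letter.a ∧ α = [Letter.a] ∧
      β = List.replicate (n - g - 1) Letter.a ++ [c] := by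
  obtain ⟨x, α', rfl⟩ : ∃ x α', α = x :: α' := by
    cases α with
    | nil => simp at hα
    | cons x t => exact ⟨x, t, rfl⟩
  rw [ovr_cons] at E
  -- regroup both sides as _ ++ [last]
  have E' : (γ ++ (x :: α') ++ β ++ ovr Letter.bar α') ++ [Letter.bar x]
      = (List.replicate n Letter.a ++ [c]) ++ [Letter.a'] := by
    simpa [List.append_assoc] using E
  obtain ⟨E1, E2⟩ := List.append_inj' E' (by simp)
  have hx : x = Letter.a := by
    have := List.cons.injEq .. ▸ E2
    cases x <;> simp_all [Letter.bar]
  subst hx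
  -- show α' = []
  have hα' : α' = [] := by
    by_contra hne
    obtain ⟨y, α'', rfl⟩ : ∃ y α'', α' = y :: α'' := by
      cases α' with
      | nil => simp at hne
      | cons y t => exact ⟨y, t, rfl⟩
    -- y is a member of the RHS, and bar y as well
    have hy : y ∈ List.replicate n Letter.a ++ [c] := by
      rw [← E1]; simp
    have hby : Letter.bar y ∈ List.replicate n Letter.a ++ [c] := by
      rw [← E1]
      have : Letter.bar y ∈ ovr Letter.bar (y :: α'') := by
        rw [ovr_cons]; simp
      exact List.mem_append_right _ this
    simp only [List.mem_append, List.mem_replicate, List.mem_singleton] at hy hby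
    rcases hc with rfl | rfl <;> rcases hy with ⟨_, rfl⟩ | rfl <;>
      simp_all [Letter.bar]
  subst hα'
  -- now E1 : γ ++ [a] ++ β ++ [] = replicate n a ++ [c]
  simp only [ovr_nil, List.append_nil] at E1
  rcases List.eq_nil_or_concat β with rfl | ⟨β₂, z, rfl⟩
  · have : Letter.a = c := by
      have := List.append_inj' (by simpa [List.append_assoc] using E1 :
        γ ++ [Letter.a] = List.replicate n Letter.a ++ [c]) (by simp)
      simpa using this.2
    rcases hc with rfl | rfl <;> simp at this
  · have E3 : (γ ++ [Letter.a] ++ β₂) ++ [z] = List.replicate n Letter.a ++ [c] := by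
      simpa [List.append_assoc] using E1
    obtain ⟨E4, E5⟩ := List.append_inj' E3 (by simp)
    have hz : z = c := by simpa using E5
    subst hz
    have hall : ∀ u ∈ γ ++ [Letter.a] ++ β₂, u = Letter.a := by
      intro u hu
      rw [E4] at hu
      exact (List.mem_replicate.mp hu).2
    have hγ : γ = List.replicate γ.length Letter.a :=
      List.eq_replicate_length.mpr (fun u hu => hall u (by simp [hu]))
    have hβ₂ : β₂ = List.replicate β₂.length Letter.a :=
      List.eq_replicate_length.mpr (fun u hu => hall u (by simp [hu]))
    have hlen : γ.length + 1 + β₂.length = n := by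
      have := congrArg List.length E4
      simp at this
      omega
    refine ⟨γ.length, by omega, hγ, rfl, ?_⟩
    have : n - γ.length - 1 = β₂.length := by omega
    rw [this, ← hβ₂, List.concat_eq_append]

open Letter in
lemma decompL2 {γ α β : List Letter} {n : ℕ}
    (hα : 1 ≤ α.length)
    (E : α ++ β ++ ovr Letter.bar α ++ ovr Letter.bar γ
        = [Letter.a, Letter.b] ++ List.replicate n Letter.a') :
    ∃ g k, g + k + 1 = n ∧ γ = List.replicate g Letter.a ∧ α = [Letter.a] ∧
      β = Letter.b :: List.replicate k Letter.a' := by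
  obtain ⟨x, α', rfl⟩ : ∃ x α', α = x :: α' := by
    cases α with
    | nil => simp at hα
    | cons x t => exact ⟨x, t, rfl⟩
  have hx : x = Letter.a := by
    have := congrArg (List.head? ·) E
    simpa using this
  subst hx
  have hα' : α' = [] := by
    by_contra hne
    obtain ⟨y, α'', rfl⟩ : ∃ y α'', α' = y :: α'' := by
      cases α' with
      | nil => simp at hne
      | cons y t => exact ⟨y, t, rfl⟩
    have E2 : y :: (α'' ++ β ++ ovr Letter.bar (Letter.a :: y :: α'')
        ++ ovr Letter.bar γ) = Letter.b :: List.replicate n Letter.a' := by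
      simpa [List.append_assoc] using E
    have hy : y = Letter.b := (List.cons.injEq .. ▸ E2).1
    subst hy
    -- bar b = b' is a member of RHS
    have hmem : Letter.b' ∈ [Letter.a, Letter.b] ++ List.replicate n Letter.a' := by
      rw [← E]
      have : Letter.b' ∈ ovr Letter.bar (Letter.a :: Letter.b :: α'') := by
        simp [ovr, Letter.bar]
      exact List.mem_append_left _ (List.mem_append_right _ this)
    simp [List.mem_replicate] at hmem
  subst hα'
  have E2 : β ++ [Letter.a'] ++ ovr Letter.bar γ = Letter.b :: List.replicate n Letter.a' := by
    have := (List.cons.injEq .. ▸ (by simpa [ovr, Letter.bar, List.append_assoc] using E :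
      Letter.a :: (β ++ [Letter.a'] ++ ovr Letter.bar γ)
        = Letter.a :: Letter.b :: List.replicate n Letter.a')).2
    exact this
  obtain ⟨z, β₂, rfl⟩ : ∃ z β₂, β = z :: β₂ := by
    cases β with
    | nil =>
      exfalso
      have := (List.cons.injEq .. ▸ (by simpa using E2 :
        Letter.a' :: ovr Letter.bar γ = Letter.b :: List.replicate n Letter.a')).1
      simp at this
    | cons z t => exact ⟨z, t, rfl⟩
  have E3 : z :: (β₂ ++ [Letter.a'] ++ ovr Letter.bar γ)
      = Letter.b :: List.replicate n Letter.a' := by simpa [List.append_assoc] using E2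
  obtain ⟨hz, E4⟩ := List.cons.injEq .. ▸ E3
  subst hz
  have hall : ∀ u ∈ β₂ ++ [Letter.a'] ++ ovr Letter.bar γ, u = Letter.a' := by
    intro u hu
    rw [E4] at hu
    exact (List.mem_replicate.mp hu).2
  have hβ₂ : β₂ = List.replicate β₂.length Letter.a' :=
    List.eq_replicate_length.mpr (fun u hu => hall u (by simp [hu]))
  have hγ' : ovr Letter.bar γ = List.replicate (ovr Letter.bar γ).length Letter.a' :=
    List.eq_replicate_length.mpr (fun u hu => hall u (by simp [hu]))
  have hγ : γ = List.replicate (ovr Letter.bar γ).length Letter.a := by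
    have := congrArg (ovr Letter.bar) hγ'
    rwa [ovr_ovr, ovr_replicate_a'] at this
  have hlen : β₂.length + 1 + (ovr Letter.bar γ).length = n := by
    have := congrArg List.length E4
    simp at this
    omega
  exact ⟨(ovr Letter.bar γ).length, β₂.length, by omega, hγ, rfl, by rw [← hβ₂]⟩

lemma canon_inj {i j i' j' : ℕ} {c c' : Letter}
    (hc : c = Letter.b ∨ c = Letter.b') (hc' : c' = Letter.b ∨ c' = Letter.b')
    (h : List.replicate i Letter.a ++ [c] ++ List.replicate j Letter.a'
       = List.replicate i' Letter.a ++ [c'] ++ List.replicate j' Letter.a') :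
    i = i' ∧ c = c' ∧ j = j' := by
  have hi : i = i' := by
    have := congrArg (List.count Letter.a) h
    rcases hc with rfl | rfl <;> rcases hc' with rfl | rfl <;>
      simpa [List.count_append, List.count_replicate, List.count_singleton] using this
  subst hi
  have hlen := congrArg List.length h
  simp at hlen
  have hj : j = j' := by omega
  subst hj
  have h2 := List.append_inj_left h (by simp)
  have h3 := List.append_inj_right h2 (by simp)
  simp at h3
  exact ⟨rfl, h3, rfl⟩

/-! ### DFAs -/

inductive St : Type
  | s0 | s1 | s2 | dead
deriving DecidableEq

instance : Fintype St :=
  ⟨{.s0, .s1, .s2, .dead}, fun x => by cases x <;> simp⟩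

def M1 : DFA Letter St where
  step := fun s x =>
    match s, x with
    | .s0, .a => .s0
    | .s0, .b => .s1
    | .s0, .b' => .s1
    | .s0, .a' => .dead
    | .s1, .a' => .s2
    | .s1, _ => .dead
    | .s2, _ => .dead
    | .dead, _ => .dead
  start := .s0
  accept := {.s2}

lemma M1_dead : ∀ w, M1.evalFrom St.dead w = St.dead := by
  intro w
  induction w with
  | nil => rfl
  | cons x t ih =>
    have : M1.step St.dead x = St.dead := by cases x <;> rfl
    simp [DFA.evalFrom, List.foldl_cons] at ih ⊢
    rw [this]; exact ih

lemma M1_s2 : ∀ w, M1.evalFrom St.s2 w = St.s2 ↔ w = [] := by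
  intro w
  cases w with
  | nil => simp
  | cons x t =>
    have h1 : M1.step St.s2 x = St.dead := by cases x <;> rfl
    have : M1.evalFrom St.s2 (x :: t) = St.dead := by
      simp [DFA.evalFrom, List.foldl_cons, h1]
      have := M1_dead t
      simpa [DFA.evalFrom] using this
    simp [this]

lemma M1_s1 : ∀ w, M1.evalFrom St.s1 w = St.s2 ↔ w = [Letter.a'] := by
  intro w
  cases w with
  | nil => simp [DFA.evalFrom]
  | cons x t =>
    have e : M1.evalFrom St.s1 (x :: t) = M1.evalFrom (M1.step St.s1 x) t := rfl
    cases x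
    case a' =>
      rw [e, show M1.step St.s1 Letter.a' = St.s2 from rfl, M1_s2]
      simp
    case a =>
      rw [e, show M1.step St.s1 Letter.a = St.dead from rfl, M1_dead]; simp
    case b =>
      rw [e, show M1.step St.s1 Letter.b = St.dead from rfl, M1_dead]; simp
    case b' =>
      rw [e, show M1.step St.s1 Letter.b' = St.dead from rfl, M1_dead]; simp

lemma M1_s0 : ∀ w, M1.evalFrom St.s0 w = St.s2 ↔
    ((∃ n, w = List.replicate n Letter.a ++ [Letter.b, Letter.a']) ∨
     (∃ n, w = List.replicate n Letter.a ++ [Letter.b', Letter.a'])) := by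
  intro w
  induction w with
  | nil =>
    simp only [DFA.evalFrom, List.foldl_nil]
    constructor
    · intro h; exact absurd h (by decide)
    · rintro (⟨n, h⟩ | ⟨n, h⟩) <;> exact absurd (congrArg List.length h) (by simp)
  | cons x t ih =>
    have e : M1.evalFrom St.s0 (x :: t) = M1.evalFrom (M1.step St.s0 x) t := rfl
    have key : ∀ (c : Letter), c ≠ Letter.a →
        ((∃ n, (Letter.a :: t : List Letter) = List.replicate n Letter.a ++ [c, Letter.a'])
          ↔ (∃ n, t = List.replicate n Letter.a ++ [c, Letter.a'])) := by
      intro c hcne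
      constructor
      · rintro ⟨n, h⟩
        cases n with
        | zero => simp at h; exact absurd h.1.symm hcne
        | succ m =>
          rw [List.replicate_succ] at h
          simp at h
          exact ⟨m, h⟩
      · rintro ⟨n, rfl⟩
        exact ⟨n + 1, by rw [List.replicate_succ]; simp⟩
    have key2 : ∀ (c x : Letter), x ≠ Letter.a → c ≠ Letter.a →
        ((∃ n, (x :: t : List Letter) = List.replicate n Letter.a ++ [c, Letter.a'])
          ↔ (x = c ∧ t = [Letter.a'])) := by
      intro c x hx hc
      constructor
      · rintro ⟨n, h⟩
        cases n with
        | zero => simpa using h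
        | succ m => rw [List.replicate_succ] at h; simp at h; exact absurd h.1 hx
      · rintro ⟨rfl, rfl⟩; exact ⟨0, rfl⟩
    cases x
    case a =>
      rw [e, show M1.step St.s0 Letter.a = St.s0 from rfl, ih,
        key Letter.b (by decide), key Letter.b' (by decide)]
    case b =>
      rw [e, show M1.step St.s0 Letter.b = St.s1 from rfl, M1_s1,
        key2 Letter.b Letter.b (by decide) (by decide),
        key2 Letter.b' Letter.b (by decide) (by decide)]
      simp
    case b' =>
      rw [e, show M1.step St.s0 Letter.b' = St.s1 from rfl, M1_s1,
        key2 Letter.b Letter.b' (by decide) (by decide),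
        key2 Letter.b' Letter.b' (by decide) (by decide)]
      simp
    case a' =>
      rw [e, show M1.step St.s0 Letter.a' = St.dead from rfl, M1_dead,
        key2 Letter.b Letter.a' (by decide) (by decide),
        key2 Letter.b' Letter.a' (by decide) (by decide)]
      simp

def M2 : DFA Letter St where
  step := fun s x =>
    match s, x with
    | .s0, .a => .s1
    | .s0, _ => .dead
    | .s1, .b => .s2
    | .s1, _ => .dead
    | .s2, .a' => .s2
    | .s2, _ => .dead
    | .dead, _ => .dead
  start := .s0
  accept := {.s2}

lemma M2_dead : ∀ w, M2.evalFrom St.dead w = St.dead := by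
  intro w
  induction w with
  | nil => rfl
  | cons x t ih =>
    have : M2.step St.dead x = St.dead := by cases x <;> rfl
    simpa [DFA.evalFrom, List.foldl_cons, this] using ih

lemma M2_s2 : ∀ w, M2.evalFrom St.s2 w = St.s2 ↔ ∃ n, w = List.replicate n Letter.a' := by
  intro w
  induction w with
  | nil => simpa [DFA.evalFrom] using ⟨0, rfl⟩
  | cons x t ih =>
    have e : M2.evalFrom St.s2 (x :: t) = M2.evalFrom (M2.step St.s2 x) t := rfl
    have hxne : ∀ (x : Letter), x ≠ Letter.a' →
        ¬ ∃ n, (x :: t : List Letter) = List.replicate n Letter.a' := by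
      rintro x hx ⟨n, h⟩
      cases n with
      | zero => simp at h
      | succ m => rw [List.replicate_succ] at h; simp at h; exact hx h.1
    cases x
    case a' =>
      rw [e, show M2.step St.s2 Letter.a' = St.s2 from rfl, ih]
      constructor
      · rintro ⟨n, rfl⟩; exact ⟨n + 1, by rw [List.replicate_succ]⟩
      · rintro ⟨n, h⟩
        cases n with
        | zero => simp at h
        | succ m => rw [List.replicate_succ] at h; simp at h; exact ⟨m, h⟩
    case a =>
      rw [e, show M2.step St.s2 Letter.a = St.dead from rfl, M2_dead]
      simpa using hxne Letter.a (by decide)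
    case b =>
      rw [e, show M2.step St.s2 Letter.b = St.dead from rfl, M2_dead]
      simpa using hxne Letter.b (by decide)
    case b' =>
      rw [e, show M2.step St.s2 Letter.b' = St.dead from rfl, M2_dead]
      simpa using hxne Letter.b' (by decide)

lemma M2_s1 : ∀ w, M2.evalFrom St.s1 w = St.s2 ↔
    ∃ n, w = Letter.b :: List.replicate n Letter.a' := by
  intro w
  cases w with
  | nil =>
    constructor
    · intro h; exact absurd h (by decide)
    · rintro ⟨n, h⟩; simp at h
  | cons x t =>
    have e : M2.evalFrom St.s1 (x :: t) = M2.evalFrom (M2.step St.s1 x) t := rfl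
    cases x
    case b =>
      rw [e, show M2.step St.s1 Letter.b = St.s2 from rfl, M2_s2]
      simp
    case a =>
      rw [e, show M2.step St.s1 Letter.a = St.dead from rfl, M2_dead]; simp
    case a' =>
      rw [e, show M2.step St.s1 Letter.a' = St.dead from rfl, M2_dead]; simp
    case b' =>
      rw [e, show M2.step St.s1 Letter.b' = St.dead from rfl, M2_dead]; simp

lemma M2_s0 : ∀ w, M2.evalFrom St.s0 w = St.s2 ↔
    ∃ n, w = Letter.a :: Letter.b :: List.replicate n Letter.a' := by
  intro w
  cases w with
  | nil =>
    constructor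
    · intro h; exact absurd h (by decide)
    · rintro ⟨n, h⟩; simp at h
  | cons x t =>
    have e : M2.evalFrom St.s0 (x :: t) = M2.evalFrom (M2.step St.s0 x) t := rfl
    cases x
    case a =>
      rw [e, show M2.step St.s0 Letter.a = St.s1 from rfl, M2_s1]
      simp
    case b =>
      rw [e, show M2.step St.s0 Letter.b = St.dead from rfl, M2_dead]; simp
    case a' =>
      rw [e, show M2.step St.s0 Letter.a' = St.dead from rfl, M2_dead]; simp
    case b' =>
      rw [e, show M2.step St.s0 Letter.b' = St.dead from rfl, M2_dead]; simp

lemma exL1_regular : exL1.IsRegular := by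
  refine ⟨St, inferInstance, M1, ?_⟩
  ext w
  rw [DFA.mem_accepts]
  show M1.evalFrom St.s0 w ∈ ({St.s2} : Set St) ↔ _
  rw [Set.mem_singleton_iff, M1_s0]
  rfl

lemma exL2_regular : exL2.IsRegular := by
  refine ⟨St, inferInstance, M2, ?_⟩
  ext w
  rw [DFA.mem_accepts]
  show M2.evalFrom St.s0 w ∈ ({St.s2} : Set St) ↔ _
  rw [Set.mem_singleton_iff, M2_s0]
  constructor
  · rintro ⟨n, rfl⟩; exact ⟨n, rfl⟩
  · rintro ⟨n, rfl⟩; exact ⟨n, rfl⟩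

lemma hairpin_eq :
    hairpinCompletion Letter.bar 1 exL1 exL2 =
      { w | (∃ i j : ℕ, 1 ≤ i ∧ 1 ≤ j ∧
            w = List.replicate i .a ++ [.b] ++ List.replicate j .a') ∨
          (∃ i j : ℕ, 1 ≤ j ∧ j ≤ i ∧
            w = List.replicate i .a ++ [.b'] ++ List.replicate j .a') } := by
  ext w
  constructor
  · rintro ⟨γ, α, β, rfl, hκ, h | h⟩
    · rcases h with ⟨n, hw⟩ | ⟨n, hw⟩
      · obtain ⟨g, hg, rfl, rfl, rfl⟩ := decompL1 (Or.inl rfl) hκ hw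
        refine Or.inl ⟨g + (1 + (n - g - 1)), 1 + g, by omega, by omega, ?_⟩
        simp [ovr_replicate_a, ovr, Letter.bar, List.replicate_add, List.append_assoc]
      · obtain ⟨g, hg, rfl, rfl, rfl⟩ := decompL1 (Or.inr rfl) hκ hw
        refine Or.inr ⟨g + (1 + (n - g - 1)), 1 + g, by omega, by omega, ?_⟩
        simp [ovr_replicate_a, ovr, Letter.bar, List.replicate_add, List.append_assoc]
    · rcases h with ⟨n, hw⟩
      obtain ⟨g, k, hgk, rfl, rfl, rfl⟩ := decompL2 hκ hw
      refine Or.inl ⟨g + 1, k + (1 + g), by omega, by omega, ?_⟩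
      simp [ovr_replicate_a, ovr, Letter.bar, List.replicate_add, List.append_assoc]
  · rintro (⟨i, j, hi, hj, rfl⟩ | ⟨i, j, hj, hji, rfl⟩)
    · by_cases hij : j ≤ i
      · -- use L1 with c = b
        obtain ⟨p, rfl⟩ : ∃ p, j = 1 + p := ⟨j - 1, by omega⟩
        obtain ⟨q, rfl⟩ : ∃ q, i = p + (1 + q) := ⟨i - (1 + p), by omega⟩
        refine ⟨List.replicate p .a, [.a], List.replicate q .a ++ [.b], ?_, by simp,
          Or.inl (Or.inl ⟨p + (1 + q), ?_⟩)⟩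
        · simp [ovr_replicate_a, ovr, Letter.bar, List.replicate_add, List.append_assoc]
        · simp [ovr, Letter.bar, List.replicate_add, List.append_assoc]
      · -- use L2
        obtain ⟨p, rfl⟩ : ∃ p, i = p + 1 := ⟨i - 1, by omega⟩
        obtain ⟨d, rfl⟩ : ∃ d, j = d + (1 + p) := ⟨j - (p + 1), by omega⟩
        refine ⟨List.replicate p .a, [.a], .b :: List.replicate d .a', ?_, by simp,
          Or.inr ⟨d + (1 + p), ?_⟩⟩
        · simp [ovr_replicate_a, ovr, Letter.bar, List.replicate_add, List.append_assoc]
        · simp [ovr_replicate_a, ovr, Letter.bar, List.replicate_add, List.append_assoc]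
    · -- b' case, j ≤ i : use L1 with c = b'
      obtain ⟨p, rfl⟩ : ∃ p, j = 1 + p := ⟨j - 1, by omega⟩
      obtain ⟨q, rfl⟩ : ∃ q, i = p + (1 + q) := ⟨i - (1 + p), by omega⟩
      refine ⟨List.replicate p .a, [.a], List.replicate q .a ++ [.b'], ?_, by simp,
        Or.inl (Or.inr ⟨p + (1 + q), ?_⟩)⟩
      · simp [ovr_replicate_a, ovr, Letter.bar, List.replicate_add, List.append_assoc]
      · simp [ovr, Letter.bar, List.replicate_add, List.append_assoc]

lemma hairpin_not_regular : ¬ (hairpinCompletion Letter.bar 1 exL1 exL2).IsRegular := by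
  rintro ⟨σ, fin, M, hM⟩
  rw [hairpin_eq] at hM
  have key : ∀ i j : ℕ, i < j →
      M.eval (List.replicate i Letter.a) = M.eval (List.replicate j Letter.a) → False := by
    intro i j hij hfe
    set s : List Letter := Letter.b' :: List.replicate j Letter.a' with hs
    have heval : M.eval (List.replicate i Letter.a ++ s)
        = M.eval (List.replicate j Letter.a ++ s) := by
      simp only [DFA.eval, DFA.evalFrom_of_append]
      rw [show M.evalFrom M.start (List.replicate i Letter.a)
          = M.evalFrom M.start (List.replicate j Letter.a) from hfe]
    have hmemj : List.replicate j Letter.a ++ s ∈ M.accepts := by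
      rw [hM]
      exact Or.inr ⟨j, j, by omega, le_rfl, by simp [hs, List.append_assoc]⟩
    have hmemi : List.replicate i Letter.a ++ s ∈ M.accepts := by
      rw [DFA.mem_accepts] at hmemj ⊢
      rwa [heval]
    rw [hM] at hmemi
    rcases hmemi with ⟨i', j', hi', hj', he⟩ | ⟨i', j', hj', hji', he⟩
    · have he' : List.replicate i Letter.a ++ [Letter.b'] ++ List.replicate j Letter.a'
          = List.replicate i' Letter.a ++ [Letter.b] ++ List.replicate j' Letter.a' := by
        simpa [hs, List.append_assoc] using he
      obtain ⟨-, hbc, -⟩ := canon_inj (Or.inr rfl) (Or.inl rfl) he'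
      exact absurd hbc (by decide)
    · have he' : List.replicate i Letter.a ++ [Letter.b'] ++ List.replicate j Letter.a'
          = List.replicate i' Letter.a ++ [Letter.b'] ++ List.replicate j' Letter.a' := by
        simpa [hs, List.append_assoc] using he
      obtain ⟨rfl, -, rfl⟩ := canon_inj (Or.inr rfl) (Or.inr rfl) he'
      omega
  obtain ⟨i, j, hne, hfe⟩ := Finite.exists_ne_map_eq_of_infinite
    (fun i : ℕ => M.eval (List.replicate i Letter.a))
  rcases hne.lt_or_gt with h | h
  · exact key i j h hfe
  · exact key j i h hfe.symm

theorem hairpin_completion_not_necessarily_regular :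
    exL1.IsRegular ∧ exL2.IsRegular ∧
    hairpinCompletion Letter.bar 1 exL1 exL2 =
      { w | (∃ i j : ℕ, 1 ≤ i ∧ 1 ≤ j ∧
            w = List.replicate i .a ++ [.b] ++ List.replicate j .a') ∨
          (∃ i j : ℕ, 1 ≤ j ∧ j ≤ i ∧
            w = List.replicate i .a ++ [.b'] ++ List.replicate j .a') } ∧
    ¬ (hairpinCompletion Letter.bar 1 exL1 exL2).IsRegular :=
  ⟨exL1_regular, exL2_regular, hairpin_eq, hairpin_not_regular⟩
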